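/- The Petersen graph has exactly 6 perfect matchings, and every edge of the Petersen graph lies in exactly 2 of these 6 perfect matchings. -/

import Mathlib

/-- Vertices of the Petersen graph: 2-element subsets of a 5-element set. -/
abbrev PetersenVertex : Type := {s : Finset (Fin 5) // s.card = 2}

/-- The Petersen graph as the Kneser graph K(5,2): two 2-subsets are
adjacent iff they are disjoint. -/
def petersen : SimpleGraph PetersenVertex :=
  SimpleGraph.fromRel (fun a b => Disjoint a.1 b.1)

instance : DecidableRel petersen.Adj := fun a b =>
  decidable_of_iff (a ≠ b ∧ (Disjoint a.1 b.1 ∨ Disjoint b.1 a.1)) Iff.rfl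

def pmSets : Finset (Finset (Sym2 PetersenVertex)) :=
  (petersen.edgeFinset.powersetCard 5).filter
    (fun s => ∀ v : PetersenVertex, (s.filter (fun e => v ∈ e)).card = 1)

def toSub (s : Finset (Sym2 PetersenVertex)) : petersen.Subgraph where
  verts := Set.univ
  Adj a b := s(a,b) ∈ s ∧ petersen.Adj a b
  adj_sub h := h.2
  edge_vert _ := Set.mem_univ _
  symm := ⟨fun a b h => ⟨by rw [Sym2.eq_swap]; exact h.1, h.2.symm⟩⟩

lemma edgeSet_toSub (s : Finset (Sym2 PetersenVertex)) :
    (toSub s).edgeSet = {e ∈ (s : Set (Sym2 PetersenVertex)) | e ∈ petersen.edgeSet} := by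
  ext e
  induction e with
  | _ a b =>
    simp [SimpleGraph.Subgraph.mem_edgeSet, toSub, SimpleGraph.mem_edgeSet, and_comm]

lemma card_eq_five {s : Finset (Sym2 PetersenVertex)} (hsub : s ⊆ petersen.edgeFinset)
    (h : ∀ v : PetersenVertex, (s.filter (fun e => v ∈ e)).card = 1) : s.card = 5 := by
  have key : ∑ v : PetersenVertex, (s.filter (fun e => v ∈ e)).card = 2 * s.card := by
    simp only [Finset.card_filter]
    rw [Finset.sum_comm]
    have h2 : ∀ e ∈ s, (∑ v : PetersenVertex, if v ∈ e then (1:ℕ) else 0) = 2 := by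
      intro e he
      have hadj : e ∈ petersen.edgeSet := by
        simpa [SimpleGraph.mem_edgeFinset] using hsub he
      induction e with
      | _ a b =>
        have hab : a ≠ b := ((SimpleGraph.mem_edgeSet _).mp hadj).ne
        rw [← Finset.card_filter]
        have heq : (Finset.univ.filter (fun v => v ∈ s(a,b))) = {a, b} := by
          ext v; simp [Sym2.mem_iff]
        rw [heq, Finset.card_insert_of_notMem (by simpa using hab), Finset.card_singleton]
    rw [Finset.sum_congr rfl h2, Finset.sum_const, smul_eq_mul, mul_comm]
  rw [Finset.sum_congr rfl (fun v _ => h v), Finset.sum_const, smul_eq_mul, mul_one] at key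
  have hcard : (Finset.univ : Finset PetersenVertex).card = 10 := by decide
  rw [hcard] at key
  omega

lemma mem_pmSets {s : Finset (Sym2 PetersenVertex)} :
    s ∈ pmSets ↔ s ⊆ petersen.edgeFinset ∧
      ∀ v : PetersenVertex, (s.filter (fun e => v ∈ e)).card = 1 := by
  constructor
  · intro h
    rw [pmSets, Finset.mem_filter, Finset.mem_powersetCard] at h
    exact ⟨h.1.1, h.2⟩
  · intro ⟨h1, h2⟩
    rw [pmSets, Finset.mem_filter, Finset.mem_powersetCard]
    exact ⟨⟨h1, card_eq_five h1 h2⟩, h2⟩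

lemma main_eq : {M : petersen.Subgraph | M.IsPerfectMatching} = toSub '' ↑pmSets := by
  ext M
  simp only [Set.mem_setOf_eq, Set.mem_image, Finset.mem_coe]
  constructor
  · intro hM
    refine ⟨(Set.toFinite M.edgeSet).toFinset, ?_, ?_⟩
    · rw [mem_pmSets]
      constructor
      · intro e he
        rw [Set.Finite.mem_toFinset] at he
        rw [SimpleGraph.mem_edgeFinset]
        exact M.edgeSet_subset he
      · intro v
        obtain ⟨w, hw, hu⟩ := hM.1 (hM.2 v)
        rw [Finset.card_eq_one]
        refine ⟨s(v,w), ?_⟩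
        ext e
        simp only [Finset.mem_filter, Set.Finite.mem_toFinset, Finset.mem_singleton]
        constructor
        · rintro ⟨he, hve⟩
          obtain ⟨u, rfl⟩ := Sym2.mem_iff_exists.mp hve
          rw [SimpleGraph.Subgraph.mem_edgeSet] at he
          rw [hu u he]
        · rintro rfl
          exact ⟨SimpleGraph.Subgraph.mem_edgeSet.mpr hw, Sym2.mem_mk_left v w⟩
    · apply SimpleGraph.Subgraph.ext
      · exact (Set.eq_univ_of_forall hM.2).symm
      · ext a b
        simp only [toSub, Set.Finite.mem_toFinset, SimpleGraph.Subgraph.mem_edgeSet]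
        exact ⟨fun h => h.1, fun h => ⟨h, M.adj_sub h⟩⟩
  · rintro ⟨s, hs, rfl⟩
    rw [mem_pmSets] at hs
    constructor
    · intro v _
      have h1 := hs.2 v
      rw [Finset.card_eq_one] at h1
      obtain ⟨e, he⟩ := h1
      have hmem : e ∈ s ∧ v ∈ e := by
        have : e ∈ s.filter (fun e => v ∈ e) := he ▸ Finset.mem_singleton_self e
        simpa using this
      obtain ⟨w, rfl⟩ := Sym2.mem_iff_exists.mp hmem.2
      have hadj : petersen.Adj v w := by
        have := hs.1 hmem.1
        rwa [SimpleGraph.mem_edgeFinset, SimpleGraph.mem_edgeSet] at this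
      refine ⟨w, ⟨hmem.1, hadj⟩, ?_⟩
      rintro w' ⟨hw', hadj'⟩
      have : s(v,w') ∈ s.filter (fun e => v ∈ e) := by
        simp [hw']
      rw [he, Finset.mem_singleton] at this
      exact Sym2.congr_right.mp this
    · intro v
      exact Set.mem_univ v

lemma injOn_toSub : Set.InjOn toSub ↑pmSets := by
  intro a ha b hb hab
  rw [Finset.mem_coe, mem_pmSets] at ha hb
  have ea := edgeSet_toSub a
  have eb := edgeSet_toSub b
  rw [hab, eb] at ea
  apply Finset.coe_injective
  ext e
  have hsub : ∀ {t : Finset (Sym2 PetersenVertex)}, t ⊆ petersen.edgeFinset →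
      {x ∈ (t : Set (Sym2 PetersenVertex)) | x ∈ petersen.edgeSet} = ↑t := by
    intro t ht
    ext x
    simp only [Set.mem_setOf_eq, Finset.mem_coe, and_iff_left_iff_imp]
    intro hx
    have := ht hx
    rwa [SimpleGraph.mem_edgeFinset] at this
  rw [hsub hb.1, hsub ha.1] at ea
  rw [← ea]

set_option maxRecDepth 100000 in
set_option maxHeartbeats 4000000 in
/-- The Petersen graph has exactly 6 perfect matchings, and every edge lies
in exactly 2 of them. -/
theorem stmt3 :
    Set.ncard {M : petersen.Subgraph | M.IsPerfectMatching} = 6 ∧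
    ∀ e ∈ petersen.edgeSet,
      Set.ncard {M : petersen.Subgraph | M.IsPerfectMatching ∧ e ∈ M.edgeSet} = 2 := by
  constructor
  · rw [main_eq, Set.ncard_image_of_injOn injOn_toSub, Set.ncard_coe_finset]
    decide
  · intro e he
    have heq : {M : petersen.Subgraph | M.IsPerfectMatching ∧ e ∈ M.edgeSet} =
        toSub '' ↑(pmSets.filter (fun s => e ∈ s)) := by
      ext M
      simp only [Set.mem_setOf_eq, Set.mem_image, Finset.mem_coe, Finset.mem_filter]
      constructor
      · rintro ⟨hM, heM⟩
        have : M ∈ {M : petersen.Subgraph | M.IsPerfectMatching} := hM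
        rw [main_eq] at this
        obtain ⟨s, hs, rfl⟩ := this
        refine ⟨s, ⟨hs, ?_⟩, rfl⟩
        rw [edgeSet_toSub] at heM
        exact heM.1
      · rintro ⟨s, ⟨hs, hes⟩, rfl⟩
        have hpm : toSub s ∈ {M : petersen.Subgraph | M.IsPerfectMatching} := by
          rw [main_eq]; exact ⟨s, hs, rfl⟩
        refine ⟨hpm, ?_⟩
        rw [edgeSet_toSub]
        exact ⟨hes, he⟩
    rw [heq, Set.ncard_image_of_injOn
        (injOn_toSub.mono (Finset.coe_subset.mpr (Finset.filter_subset _ _))),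
      Set.ncard_coe_finset]
    clear heq
    have hef : e ∈ petersen.edgeFinset := SimpleGraph.mem_edgeFinset.mpr he
    clear he
    revert hef
    revert e
    decide
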